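/- The probability that the random 2-letter automaton with n states is not weakly connected is Ω(1/n); that is, there exist a constant c > 0 and N such that for all n ≥ N this probability is at least c/n. -/

import Mathlib

/-- Probability of the event `P` under the uniform measure on a finite type. -/
noncomputable def probOf (T : Type) [Fintype T] (P : T → Prop) : ℝ :=
  (Nat.card {x : T // P x} : ℝ) / (Nat.card T : ℝ)

/-- The two letters of a random 2-letter automaton acting on `Fin n`. -/
def delta2 {n : ℕ} (f : (Fin n → Fin n) × (Fin n → Fin n)) : Bool → Fin n → Fin n :=
  fun x => if x then f.1 else f.2

/-- A DFA is weakly connected if the undirected graph on `Q` having an edge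
between `q` and `q·x` for every state `q` and letter `x` is connected. -/
def WeaklyConnected {Q A : Type*} (δ : A → Q → Q) : Prop :=
  (SimpleGraph.fromRel (fun p q : Q => ∃ x : A, δ x p = q)).Connected

open Finset

section Aux

lemma isolated_not_wc {n : ℕ} (hn : 2 ≤ n) (f g : Fin n → Fin n) (q : Fin n)
    (hfq : f q = q) (hgq : g q = q)
    (hf : ∀ r, r ≠ q → f r ≠ q) (hg : ∀ r, r ≠ q → g r ≠ q) :
    ¬ WeaklyConnected (delta2 (f, g)) := by
  intro hcon
  set G := SimpleGraph.fromRel (fun p r : Fin n => ∃ x : Bool, delta2 (f,g) x p = r) with hG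
  have noadj : ∀ r, ¬ G.Adj q r := by
    intro r hadj
    rw [hG, SimpleGraph.fromRel_adj] at hadj
    obtain ⟨hne, h | h⟩ := hadj
    · obtain ⟨x, hx⟩ := h
      cases x <;> simp [delta2, hfq, hgq] at hx <;> exact hne hx
    · obtain ⟨x, hx⟩ := h
      cases x <;> simp [delta2] at hx
      · exact hg r (Ne.symm hne) hx
      · exact hf r (Ne.symm hne) hx
  obtain ⟨r0, hr0⟩ := Fintype.exists_ne_of_one_lt_card (by simp; omega) q
  obtain ⟨w⟩ := hcon.preconnected q r0
  cases w with
  | nil => exact hr0 rfl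
  | cons h p => exact noadj _ h

variable (n : ℕ)

/-- allowed values for the first letter given an isolated fixed point `q` -/
def tf (q r : Fin n) : Finset (Fin n) := if r = q then {q} else univ \ {q, r}

/-- allowed values for the second letter given an isolated fixed point `q` -/
def tg (q r : Fin n) : Finset (Fin n) := if r = q then {q} else univ \ {q}

/-- the set of bad pairs associated to `q` -/
def Bq (q : Fin n) : Finset ((Fin n → Fin n) × (Fin n → Fin n)) :=
  (Fintype.piFinset (tf n q)) ×ˢ (Fintype.piFinset (tg n q))

lemma card_tf (q : Fin n) : ∀ r, (tf n q r).card = if r = q then 1 else n - 2 := by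
  intro r
  rw [tf]
  split
  · simp
  · rename_i h
    rw [card_sdiff_of_subset (by simp), card_insert_of_notMem (by simp [Ne.symm h]),
      card_singleton, card_univ, Fintype.card_fin]

lemma card_tg (q : Fin n) : ∀ r, (tg n q r).card = if r = q then 1 else n - 1 := by
  intro r
  rw [tg]
  split
  · simp
  · rw [card_sdiff_of_subset (by simp), card_singleton, card_univ, Fintype.card_fin]

lemma prod_ite_card (m : ℕ) (q : Fin n) :
    (∏ r : Fin n, if r = q then 1 else m) = m ^ (n - 1) := by
  rw [← Finset.mul_prod_erase univ _ (mem_univ q), if_pos rfl, one_mul,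
    Finset.prod_ite_of_false (by intro x hx; exact (Finset.mem_erase.1 hx).1),
    Finset.prod_const, card_erase_of_mem (mem_univ q), card_univ, Fintype.card_fin]

lemma card_Bq (q : Fin n) : (Bq n q).card = (n-2)^(n-1) * (n-1)^(n-1) := by
  rw [Bq, card_product, Fintype.card_piFinset, Fintype.card_piFinset]
  simp_rw [card_tf, card_tg, prod_ite_card]

lemma mem_Bq (q : Fin n) (p : (Fin n → Fin n) × (Fin n → Fin n)) :
    p ∈ Bq n q ↔ (p.1 q = q ∧ p.2 q = q ∧
      (∀ r, r ≠ q → p.1 r ≠ q ∧ p.1 r ≠ r) ∧ (∀ r, r ≠ q → p.2 r ≠ q)) := by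
  rw [Bq, mem_product, Fintype.mem_piFinset, Fintype.mem_piFinset]
  constructor
  · rintro ⟨h1, h2⟩
    have e1 := h1 q; have e2 := h2 q
    simp [tf, tg] at e1 e2
    refine ⟨e1, e2, ?_, ?_⟩
    · intro r hr
      have := h1 r; simp [tf, hr] at this
      simpa using this
    · intro r hr
      have := h2 r; simp [tg, hr] at this
      exact this
  · rintro ⟨h1, h2, h3, h4⟩
    constructor
    · intro r
      by_cases hr : r = q
      · subst hr; simp [tf, h1]
      · simp [tf, hr, (h3 r hr).1, (h3 r hr).2]
    · intro r
      by_cases hr : r = q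
      · subst hr; simp [tg, h2]
      · simp [tg, hr, h4 r hr]

lemma disj_Bq : ∀ q ∈ (univ : Finset (Fin n)), ∀ q' ∈ univ, q ≠ q' →
    Disjoint (Bq n q) (Bq n q') := by
  intro q _ q' _ hne
  rw [Finset.disjoint_left]
  intro p hp hp'
  rw [mem_Bq] at hp hp'
  exact ((hp.2.2.1 q' (Ne.symm hne)).2) hp'.1

lemma exp_le_one_sub {x : ℝ} (h0 : 0 ≤ x) (h1 : x ≤ 1/2) : Real.exp (-(2*x)) ≤ 1 - x := by
  have h2 : 2*x + 1 ≤ Real.exp (2*x) := Real.add_one_le_exp (2*x)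
  have hpos : (0:ℝ) < 1 + 2*x := by linarith
  have step1 : Real.exp (-(2*x)) ≤ 1/(1+2*x) := by
    rw [Real.exp_neg, inv_eq_one_div]
    exact one_div_le_one_div_of_le hpos (by linarith)
  refine step1.trans ?_
  rw [div_le_iff₀ hpos]
  nlinarith

lemma ratio_pow_ge {x : ℝ} (a : ℝ) (m : ℕ) (hx : 0 < x) (ha : 0 ≤ a) (h2 : 2*a ≤ x)
    (hm : (m : ℝ) ≤ x) :
    Real.exp (-(2*a)) ≤ ((x - a)/x)^m := by
  have hsub : (x-a)/x = 1 - a/x := by rw [sub_div, div_self hx.ne']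
  have key : Real.exp (-(2*(a/x))) ≤ (x-a)/x := by
    rw [hsub]
    exact exp_le_one_sub (by positivity) (by rw [div_le_iff₀ hx]; linarith)
  calc Real.exp (-(2*a)) ≤ Real.exp (-(2*(a/x))*m) := by
        apply Real.exp_le_exp.2
        rw [neg_mul, neg_le_neg_iff]
        calc 2*(a/x)*m ≤ 2*(a/x)*x := by
              apply mul_le_mul_of_nonneg_left hm (by positivity)
          _ = 2*a := by field_simp
    _ = Real.exp (-(2*(a/x)))^m := by rw [← Real.exp_nat_mul]; ring_nf
    _ ≤ ((x-a)/x)^m := pow_le_pow_left₀ (Real.exp_pos _).le key m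

lemma analytic (hn : 4 ≤ n) :
    Real.exp (-6) / n ≤ ((n * ((n-2)^(n-1) * (n-1)^(n-1)) : ℕ) : ℝ) / ((n^n * n^n : ℕ) : ℝ) := by
  have h2n : 2 ≤ n := by omega
  have h1n : 1 ≤ n := by omega
  have hx : (0:ℝ) < n := by positivity
  have hn4 : (4:ℝ) ≤ n := by exact_mod_cast hn
  have hcast : ((n * ((n-2)^(n-1) * (n-1)^(n-1)) : ℕ) : ℝ)
      = (n:ℝ) * (((n:ℝ)-2)^(n-1) * ((n:ℝ)-1)^(n-1)) := by
    push_cast [Nat.cast_sub h2n, Nat.cast_sub h1n]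
    ring
  have hpow : ((n:ℝ))^n = (n:ℝ)^(n-1) * n := by
    rw [← pow_succ]; congr 1; omega
  rw [hcast]
  push_cast
  rw [hpow]
  have hrw : (n:ℝ) * (((n:ℝ)-2)^(n-1) * ((n:ℝ)-1)^(n-1)) / ((n:ℝ)^(n-1) * n * ((n:ℝ)^(n-1) * n))
      = (((n:ℝ)-2)/n)^(n-1) * (((n:ℝ)-1)/n)^(n-1) / n := by
    rw [div_pow, div_pow]
    field_simp
  rw [hrw]
  have hm : ((n-1 : ℕ) : ℝ) ≤ (n:ℝ) := by
    push_cast [Nat.cast_sub h1n]; linarith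
  have b1 : Real.exp (-4) ≤ (((n:ℝ)-2)/n)^(n-1) := by
    have := ratio_pow_ge (x := (n:ℝ)) 2 (n-1) hx (by norm_num) (by linarith) hm
    norm_num at this
    exact this
  have b2 : Real.exp (-2) ≤ (((n:ℝ)-1)/n)^(n-1) := by
    have := ratio_pow_ge (x := (n:ℝ)) 1 (n-1) hx (by norm_num) (by linarith) hm
    norm_num at this
    exact this
  have hsplit : Real.exp (-6) = Real.exp (-4) * Real.exp (-2) := by
    rw [← Real.exp_add]; norm_num
  rw [hsplit]
  gcongr
  · exact (Real.exp_pos _).le.trans b1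

end Aux

/-- The probability that the random 2-letter automaton with `n` states is not
weakly connected is `Ω(1/n)`. -/
theorem stmt2 :
    ∃ (c : ℝ) (N : ℕ), 0 < c ∧ ∀ n : ℕ, N ≤ n →
      c / n ≤
        probOf ((Fin n → Fin n) × (Fin n → Fin n))
          (fun f => ¬ WeaklyConnected (delta2 f)) := by
  classical
  refine ⟨Real.exp (-6), 4, Real.exp_pos _, fun n hn => ?_⟩
  have h2n : 2 ≤ n := by omega
  set T := ((Fin n → Fin n) × (Fin n → Fin n))
  set P : T → Prop := fun f => ¬ WeaklyConnected (delta2 f) with hP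
  -- the bad pairs contain the disjoint union of the `Bq`
  have hsub : (univ : Finset (Fin n)).biUnion (Bq n) ⊆ univ.filter P := by
    intro p hp
    rw [Finset.mem_biUnion] at hp
    obtain ⟨q, _, hq⟩ := hp
    rw [mem_Bq] at hq
    rw [Finset.mem_filter]
    refine ⟨mem_univ _, ?_⟩
    have : ¬ WeaklyConnected (delta2 (p.1, p.2)) :=
      isolated_not_wc h2n p.1 p.2 q hq.1 hq.2.1 (fun r hr => (hq.2.2.1 r hr).1) hq.2.2.2
    simpa using this
  have hcount : n * ((n-2)^(n-1) * (n-1)^(n-1)) ≤ (univ.filter P).card := by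
    calc n * ((n-2)^(n-1) * (n-1)^(n-1))
        = ∑ q : Fin n, (Bq n q).card := by
          simp [card_Bq, mul_comm]
      _ = ((univ : Finset (Fin n)).biUnion (Bq n)).card :=
          (Finset.card_biUnion (disj_Bq n)).symm
      _ ≤ (univ.filter P).card := Finset.card_le_card hsub
  have hcard_sub : Nat.card {x : T // P x} = (univ.filter P).card := by
    rw [Nat.card_eq_fintype_card, Fintype.card_subtype]
  have hcard_T : Nat.card T = n^n * n^n := by
    simp [T, Nat.card_eq_fintype_card]
  rw [probOf, hcard_sub, hcard_T]
  refine (analytic n hn).trans ?_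
  gcongr
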